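/- For the probability simplex on d vertices with d odd, the direction r with r_i = 2/(d−1) for 1 ≤ i ≤ (d−1)/2 and r_i = −2/(d+1) for i ≥ (d+1)/2 satisfies Σ_i r_i = 0, ‖r‖² = 4d/(d²−1), and max_{s,v ∈ {e_1,...,e_d}} ⟨r/‖r‖, s − v⟩ = 2/√(d − 1/d). -/

import Mathlib

open scoped InnerProductSpace

/-- Probability simplex width direction for odd `d`: the direction with `r_i = 2/(d-1)` on
the first `(d-1)/2` coordinates and `r_i = -2/(d+1)` on the rest satisfies `Σ r_i = 0`,
`‖r‖² = 4d/(d²-1)`, and `max_{s,v vertices} ⟨r/‖r‖, s - v⟩ = 2/√(d - 1/d)`. -/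
theorem stmt11 (d : ℕ) (hdodd : Odd d) (hd3 : 3 ≤ d) (r : EuclideanSpace ℝ (Fin d))
    (hr : ∀ i : Fin d, r i =
      if (i : ℕ) < (d - 1) / 2 then 2 / ((d : ℝ) - 1) else -2 / ((d : ℝ) + 1)) :
    (∑ i, r i) = 0 ∧ ‖r‖ ^ 2 = 4 * d / ((d : ℝ) ^ 2 - 1) ∧
    IsGreatest {t | ∃ i j : Fin d,
        t = ⟪‖r‖⁻¹ • r, EuclideanSpace.single i (1 : ℝ) - EuclideanSpace.single j 1⟫_ℝ}
      (2 / Real.sqrt ((d : ℝ) - 1 / d)) := by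
  obtain ⟨m, hm⟩ := hdodd
  have hm1 : 1 ≤ m := by omega
  have hk : (d - 1) / 2 = m := by omega
  have hdR : (3:ℝ) ≤ (d:ℝ) := by exact_mod_cast hd3
  have h1 : (0:ℝ) < (d:ℝ) - 1 := by linarith
  have h2 : (0:ℝ) < (d:ℝ) + 1 := by linarith
  have hd0 : (0:ℝ) < (d:ℝ) := by linarith
  set A : ℝ := 2 / ((d:ℝ) - 1) with hA
  set B : ℝ := -2 / ((d:ℝ) + 1) with hB
  have hA0 : 0 < A := by positivity
  have hB0 : B < 0 := div_neg_of_neg_of_pos (by norm_num) h2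
  have hrA : ∀ i : Fin d, (i:ℕ) < m → r i = A := fun i hi => by
    rw [hr, hk, if_pos hi]
  have hrB : ∀ i : Fin d, ¬ (i:ℕ) < m → r i = B := fun i hi => by
    rw [hr, hk, if_neg hi]
  have hbound : ∀ i : Fin d, B ≤ r i ∧ r i ≤ A := by
    intro i
    by_cases h : (i:ℕ) < m
    · rw [hrA i h]; constructor <;> linarith
    · rw [hrB i h]; constructor <;> linarith
  -- generic piecewise sum
  have hsum : ∀ c1 c2 : ℝ, (∑ i : Fin d, (if (i:ℕ) < m then c1 else c2))
      = m * c1 + (d - m : ℕ) * c2 := by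
    intro c1 c2
    rw [Fin.sum_univ_eq_sum_range (fun j => if j < m then c1 else c2) d,
      Finset.range_eq_Ico, ← Finset.sum_Ico_consecutive _ (Nat.zero_le m) (by omega : m ≤ d)]
    have e1 : (∑ j ∈ Finset.Ico 0 m, (if j < m then c1 else c2)) = m * c1 := by
      rw [Finset.sum_congr rfl fun x hx => if_pos (Finset.mem_Ico.mp hx).2]
      simp [mul_comm]
    have e2 : (∑ j ∈ Finset.Ico m d, (if j < m then c1 else c2)) = (d - m : ℕ) * c2 := by
      rw [Finset.sum_congr rfl fun x hx => if_neg (by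
        have := (Finset.mem_Ico.mp hx).1; omega)]
      simp [Nat.card_Ico, mul_comm]
    rw [e1, e2]
  have hmR : (m : ℝ) = ((d:ℝ) - 1) / 2 := by
    have : (d:ℝ) = 2 * m + 1 := by exact_mod_cast hm
    linarith
  have hdmR : ((d - m : ℕ) : ℝ) = ((d:ℝ) + 1) / 2 := by
    have h' : ((d - m : ℕ) : ℝ) = (d : ℝ) - (m : ℝ) := by
      push_cast [Nat.cast_sub (by omega : m ≤ d)]; ring
    rw [h', hmR]; ring
  -- sum is zero
  have hsum0 : (∑ i, r i) = 0 := by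
    rw [Finset.sum_congr rfl fun i _ => by rw [hr, hk]]
    rw [hsum, hmR, hdmR, hA, hB]
    field_simp
    ring
  -- norm squared
  have hsqne : (d:ℝ)^2 - 1 ≠ 0 := by nlinarith
  have hnsq : ‖r‖ ^ 2 = 4 * d / ((d : ℝ) ^ 2 - 1) := by
    rw [EuclideanSpace.norm_eq, Real.sq_sqrt (by positivity)]
    have : (∑ i : Fin d, ‖r i‖ ^ 2) = ∑ i : Fin d, (if (i:ℕ) < m then A^2 else B^2) := by
      refine Finset.sum_congr rfl fun i _ => ?_
      rw [hr, hk]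
      by_cases h : (i:ℕ) < m <;> simp [h, sq_abs, Real.norm_eq_abs]
    rw [this, hsum, hmR, hdmR, hA, hB]
    field_simp [h1.ne', h2.ne', hsqne]
    ring
  have hABnorm : A - B = ‖r‖ ^ 2 := by
    rw [hnsq, hA, hB]
    field_simp [h1.ne', h2.ne', hsqne]
    ring
  -- norm value
  have hdd : (d:ℝ) - 1 / d = ((d:ℝ)^2 - 1) / d := by field_simp
  have hnormval : ‖r‖ = 2 / Real.sqrt ((d : ℝ) - 1 / d) := by
    have h4 : (4:ℝ) * d / ((d:ℝ)^2 - 1) = 4 / ((d:ℝ) - 1 / d) := by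
      rw [hdd]
      field_simp
    rw [show (2:ℝ) = Real.sqrt 4 by
        rw [show (4:ℝ) = 2^2 by norm_num, Real.sqrt_sq (by norm_num)],
      ← Real.sqrt_div (by norm_num), ← h4, ← hnsq, Real.sqrt_sq (norm_nonneg r)]
  have hnpos : 0 < ‖r‖ := by
    rw [hnormval]
    have hpos : 0 < (d:ℝ) - 1 / d := by
      rw [hdd]
      exact div_pos (by nlinarith) hd0
    exact div_pos two_pos (Real.sqrt_pos.mpr hpos)
  -- inner product formula
  have hip : ∀ i j : Fin d,
      ⟪‖r‖⁻¹ • r, EuclideanSpace.single i (1 : ℝ) - EuclideanSpace.single j 1⟫_ℝ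
        = ‖r‖⁻¹ * (r i - r j) := by
    intro i j
    rw [inner_sub_right, real_inner_smul_left, real_inner_smul_left,
      EuclideanSpace.inner_single_right, EuclideanSpace.inner_single_right]
    simp
    ring
  refine ⟨hsum0, hnsq, ?_, ?_⟩
  · -- membership
    refine ⟨⟨0, by omega⟩, ⟨d - 1, by omega⟩, ?_⟩
    rw [hip, hrA ⟨0, by omega⟩ (by simp; omega),
      hrB ⟨d - 1, by omega⟩ (by simp; omega), hABnorm, ← hnormval]
    field_simp
  · -- upper bound
    rintro t ⟨i, j, rfl⟩
    rw [hip]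
    have hle : r i - r j ≤ A - B := by
      have h1 := (hbound i).2
      have h2 := (hbound j).1
      linarith
    calc ‖r‖⁻¹ * (r i - r j) ≤ ‖r‖⁻¹ * (A - B) :=
          mul_le_mul_of_nonneg_left hle (inv_nonneg.mpr (norm_nonneg r))
      _ = ‖r‖ := by rw [hABnorm]; field_simp
      _ = _ := hnormval
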